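/- Let F be a differential field containing ℂ in its constants, and let z ∈ F be transcendental over ℂ with z′ = 1; write K₀ = ℂ(z) ⊆ F for the subfield generated by ℂ and z (a differential subfield). Let e₀, e₁ ∈ ℂ, let P, J ∈ ℂ[X] with J ≠ 0 and J(z) ≠ 0 in F, and let Ω ∈ F be nonzero with z(z−1)·Ω′ = (e₀·(z−1) + e₁·z)·Ω. Suppose Γ ∈ F satisfies J(z)²·Γ′ = P(z)·Ω, and that Γ = Σ_{s=0}^{d−1} R_s·Ω^s for some d ≥ 2 and R_s ∈ K₀, where 1, Ω, …, Ω^{d−1} are linearly independent over K₀. Then there exists R₁ ∈ K₀ such that P(z)·z(z−1) = J(z)²·(z(z−1)·R₁′ + (e₀·(z−1) + e₁·z)·R₁). -/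

import Mathlib

open Polynomial

section aux
variable {F : Type*} [Field F] [Algebra ℂ F] {D : F → F}
    (hadd : ∀ a b : F, D (a + b) = D a + D b)
    (hmul : ∀ a b : F, D (a * b) = D a * b + a * D b)
    (hconst : ∀ w : ℂ, D (algebraMap ℂ F w) = 0)

include hadd in
theorem aux_D_zero : D 0 = 0 := by
  have := hadd 0 0; simp at this; exact this

include hadd hmul in
theorem aux_D_one : D 1 = 0 := by
  have h : D 1 = D 1 + D 1 := by simpa using hmul 1 1
  exact left_eq_add.mp h

include hadd in
theorem aux_D_sum {ι : Type*} (t : Finset ι) (f : ι → F) :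
    D (∑ i ∈ t, f i) = ∑ i ∈ t, D (f i) := by
  classical
  induction t using Finset.induction_on with
  | empty => simp [aux_D_zero hadd]
  | insert _ _ h ih => rw [Finset.sum_insert h, Finset.sum_insert h, hadd, ih]

include hadd hmul hconst in
theorem aux_D_mem {z : F} (x : F)
    (hx : x ∈ IntermediateField.adjoin ℂ ({z} : Set F))
    (hDz : D z ∈ IntermediateField.adjoin ℂ ({z} : Set F)) :
    D x ∈ IntermediateField.adjoin ℂ ({z} : Set F) := by
  induction hx using IntermediateField.adjoin_induction with
  | mem x hx => rw [Set.mem_singleton_iff.mp hx]; exact hDz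
  | algebraMap w => rw [hconst]; exact zero_mem _
  | add x y hx hy ihx ihy => rw [hadd]; exact add_mem ihx ihy
  | inv x hx ihx =>
      rcases eq_or_ne x 0 with rfl | hx0
      · simpa [aux_D_zero hadd] using zero_mem _
      · have h : D (x * x⁻¹) = 0 := by rw [mul_inv_cancel₀ hx0, aux_D_one hadd hmul]
        rw [hmul] at h
        have hx' : x * D x⁻¹ = -(D x * x⁻¹) := by linear_combination h
        have hinv : D x⁻¹ = -(x⁻¹ * x⁻¹ * D x) := by
          calc D x⁻¹ = x⁻¹ * (x * D x⁻¹) := by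
                rw [← mul_assoc, inv_mul_cancel₀ hx0, one_mul]
            _ = -(x⁻¹ * x⁻¹ * D x) := by rw [hx']; ring
        rw [hinv]
        exact neg_mem (mul_mem (mul_mem (inv_mem hx) (inv_mem hx)) ihx)
  | mul x y hx hy ihx ihy => rw [hmul]; exact add_mem (mul_mem ihx hy) (mul_mem hx ihy)

end aux

/-- If `Γ = Σ R_s Ω^s` (with `R_s ∈ K₀ = ℂ(z)`, the powers `1, Ω, …, Ω^{d−1}` linearly
independent over `K₀`) satisfies `J(z)²·Γ′ = P(z)·Ω` where `Ω` is a Kummer element with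
`z(z−1)Ω′ = (e₀(z−1) + e₁z)Ω`, then `P = T(R₁)` for some `R₁ ∈ K₀`, in the
cleared-denominator form
`P(z)·z(z−1) = J(z)²·(z(z−1)·R₁′ + (e₀(z−1) + e₁z)·R₁)`. -/
theorem stmt_14 {F : Type*} [Field F] [Algebra ℂ F] (D : F → F)
    (hadd : ∀ a b : F, D (a + b) = D a + D b)
    (hmul : ∀ a b : F, D (a * b) = D a * b + a * D b)
    (hconst : ∀ w : ℂ, D (algebraMap ℂ F w) = 0)
    (z : F) (hz : Transcendental ℂ z) (hDz : D z = 1)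
    (e₀ e₁ : ℂ) (P J : ℂ[X]) (hJ : J ≠ 0) (hJz : Polynomial.aeval z J ≠ 0)
    (Ω : F) (hΩ : Ω ≠ 0)
    (hΩde : z * (z - 1) * D Ω =
      (algebraMap ℂ F e₀ * (z - 1) + algebraMap ℂ F e₁ * z) * Ω)
    (Γ : F)
    (hΓ : (Polynomial.aeval z J) ^ 2 * D Γ = Polynomial.aeval z P * Ω)
    (d : ℕ) (hd : 2 ≤ d) (R : Fin d → F)
    (hR : ∀ s, R s ∈ IntermediateField.adjoin ℂ ({z} : Set F))
    (hΓeq : Γ = ∑ s : Fin d, R s * Ω ^ (s : ℕ))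
    (hLI : LinearIndependent (IntermediateField.adjoin ℂ ({z} : Set F))
      (fun s : Fin d => Ω ^ (s : ℕ))) :
    ∃ R₁ : F, R₁ ∈ IntermediateField.adjoin ℂ ({z} : Set F) ∧
      Polynomial.aeval z P * (z * (z - 1)) =
        (Polynomial.aeval z J) ^ 2 *
          (z * (z - 1) * D R₁ +
            (algebraMap ℂ F e₀ * (z - 1) + algebraMap ℂ F e₁ * z) * R₁) := by
  classical
  obtain ⟨k, rfl⟩ : ∃ k, d = k + 2 := ⟨d - 2, by omega⟩
  set K₀ := IntermediateField.adjoin ℂ ({z} : Set F) with hK₀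
  set L : F := algebraMap ℂ F e₀ * (z - 1) + algebraMap ℂ F e₁ * z with hLdef
  have hzK : z ∈ K₀ := IntermediateField.subset_adjoin ℂ {z} rfl
  have hLK : L ∈ K₀ :=
    add_mem (mul_mem (IntermediateField.algebraMap_mem _ _)
        (sub_mem hzK (one_mem _)))
      (mul_mem (IntermediateField.algebraMap_mem _ _) hzK)
  have haev : ∀ Q : ℂ[X], Polynomial.aeval z Q ∈ K₀ := by
    intro Q
    have h := Polynomial.aeval_algHom_apply K₀.val (⟨z, hzK⟩ : K₀) Q
    simpa using h ▸ (Polynomial.aeval (⟨z, hzK⟩ : K₀) Q).2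
  -- power rule
  have hpow : ∀ n : ℕ, z * (z - 1) * D (Ω ^ n) = (n : F) * L * Ω ^ n := by
    intro n
    induction n with
    | zero => simp [aux_D_one hadd hmul]
    | succ n ih =>
        rw [pow_succ, hmul]
        push_cast
        linear_combination Ω * ih + Ω ^ n * hΩde
  have hDΓ : D Γ = ∑ s : Fin (k + 2), (D (R s) * Ω ^ (s : ℕ) + R s * D (Ω ^ (s : ℕ))) := by
    rw [hΓeq, aux_D_sum hadd]
    exact Finset.sum_congr rfl fun s _ => hmul _ _
  have h2 : z * (z - 1) * D Γ =
      ∑ s : Fin (k + 2), (z * (z - 1) * D (R s) + ((s : ℕ) : F) * L * R s) * Ω ^ (s : ℕ) := by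
    rw [hDΓ, Finset.mul_sum]
    refine Finset.sum_congr rfl fun s _ => ?_
    linear_combination R s * hpow (s : ℕ)
  set c : Fin (k + 2) → F := fun s =>
    (Polynomial.aeval z J) ^ 2 * (z * (z - 1) * D (R s) + ((s : ℕ) : F) * L * R s) -
      (if s = 1 then Polynomial.aeval z P * (z * (z - 1)) else 0) with hcdef
  have hcmem : ∀ s, c s ∈ K₀ := by
    intro s
    refine sub_mem (mul_mem (pow_mem (haev J) 2)
      (add_mem (mul_mem (mul_mem hzK (sub_mem hzK (one_mem _)))
          (aux_D_mem hadd hmul hconst _ (hR s) (hDz ▸ one_mem _)))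
        (mul_mem (mul_mem (natCast_mem _ _) hLK) (hR s)))) ?_
    split
    · exact mul_mem (haev P) (mul_mem hzK (sub_mem hzK (one_mem _)))
    · exact zero_mem _
  have hsum : ∑ s : Fin (k + 2), c s * Ω ^ (s : ℕ) = 0 := by
    simp only [hcdef, sub_mul, Finset.sum_sub_distrib, ite_mul, zero_mul]
    rw [Finset.sum_ite_eq' Finset.univ (1 : Fin (k + 2))
      (fun s => Polynomial.aeval z P * (z * (z - 1)) * Ω ^ (s : ℕ))]
    simp only [Finset.mem_univ, if_true, Fin.val_one, pow_one]
    have : ∑ s : Fin (k + 2),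
        (Polynomial.aeval z J) ^ 2 * ((z * (z - 1) * D (R s) + ((s : ℕ) : F) * L * R s)) *
          Ω ^ (s : ℕ) =
        (Polynomial.aeval z J) ^ 2 * (z * (z - 1) * D Γ) := by
      rw [h2, Finset.mul_sum]
      exact Finset.sum_congr rfl fun s _ => by ring
    rw [this]
    linear_combination (z * (z - 1)) * hΓ
  set g : Fin (k + 2) → K₀ := fun s => ⟨c s, hcmem s⟩ with hgdef
  have hgsum : ∑ s : Fin (k + 2), g s • Ω ^ (s : ℕ) = 0 := by
    rw [← hsum]
    refine Finset.sum_congr rfl fun s _ => ?_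
    rw [Algebra.smul_def]
    rfl
  have hg1 : g 1 = 0 := Fintype.linearIndependent_iff.mp hLI g hgsum 1
  have hc1 : c 1 = 0 := congrArg Subtype.val hg1
  refine ⟨R 1, hR 1, ?_⟩
  simp only [hcdef, Fin.val_one, Nat.cast_one, one_mul, eq_self_iff_true, if_true] at hc1
  linear_combination -hc1
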